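/- Let m ≥ 3 and ν = m - 2 ≥ 1. Let ι₁, …, ι_m be complex numbers with Σ_{j=1}^m ι_j = -ν (as complex numbers). Assume that for every nonempty subset S ⊆ {1,…,m}, the real number Σ_{j∈S} Re(ι_j) does not lie in the open interval (1/2 - |S|, 3/2 - |S|). Then there exists j with Re(ι_j) > 0. -/

import Mathlib

/-- If `ι₁,…,ι_m` (`m ≥ 3`, `ν = m-2`) sum to `-ν` and no nonempty subset has real-part
sum in `(1/2 - |S|, 3/2 - |S|)`, then some `ι_j` has positive real part. -/
theorem stmt13 (m ν : ℕ) (hm : 3 ≤ m) (hν : ν = m - 2) (ι : Fin m → ℂ)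
    (hsum : ∑ j, ι j = -(ν : ℂ))
    (h : ∀ S : Finset (Fin m), S.Nonempty →
      (∑ j ∈ S, (ι j).re) ∉ Set.Ioo (1 / 2 - (S.card : ℝ)) (3 / 2 - (S.card : ℝ))) :
    ∃ j, 0 < (ι j).re := by
  by_contra hc
  push_neg at hc
  -- every entry has real part ≤ -1/2
  have hneg : ∀ j, (ι j).re ≤ -(1/2) := by
    intro j
    have h1 := h {j} ⟨j, Finset.mem_singleton_self j⟩
    simp only [Finset.sum_singleton, Finset.card_singleton, Nat.cast_one, Set.mem_Ioo,
      not_and, not_lt] at h1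
    by_contra hcon
    push_neg at hcon
    have := h1 (by linarith)
    linarith [hc j]
  -- prefix sums
  have key : ∀ k, k ≤ m →
      (Finset.univ.filter (fun j : Fin m => (j : ℕ) < k)).card = k ∧
      (∑ j ∈ Finset.univ.filter (fun j : Fin m => (j : ℕ) < k), (ι j).re) ≤ 1/2 - k := by
    intro k
    induction k with
    | zero =>
      intro _
      simp
    | succ k ih =>
      intro hk1
      have hk : k < m := Nat.lt_of_succ_le hk1
      obtain ⟨hcard, hsumk⟩ := ih (le_of_lt hk)
      have hsplit : (Finset.univ.filter (fun j : Fin m => (j : ℕ) < k + 1)) =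
          insert (⟨k, hk⟩ : Fin m) (Finset.univ.filter (fun j : Fin m => (j : ℕ) < k)) := by
        ext j
        simp [Nat.lt_succ_iff_lt_or_eq, Fin.ext_iff, or_comm]
        omega
      have hnotmem : (⟨k, hk⟩ : Fin m) ∉
          Finset.univ.filter (fun j : Fin m => (j : ℕ) < k) := by simp
      have hcard' : (Finset.univ.filter (fun j : Fin m => (j : ℕ) < k + 1)).card = k + 1 := by
        rw [hsplit, Finset.card_insert_of_notMem hnotmem, hcard]
      have hsum' : (∑ j ∈ Finset.univ.filter (fun j : Fin m => (j : ℕ) < k + 1), (ι j).re)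
          = (ι ⟨k, hk⟩).re + ∑ j ∈ Finset.univ.filter (fun j : Fin m => (j : ℕ) < k), (ι j).re := by
        rw [hsplit, Finset.sum_insert hnotmem]
      refine ⟨hcard', ?_⟩
      have hlt : (∑ j ∈ Finset.univ.filter (fun j : Fin m => (j : ℕ) < k + 1), (ι j).re)
          < 3/2 - (k + 1 : ℕ) := by
        rw [hsum']
        push_cast
        linarith [hneg ⟨k, hk⟩]
      have hne : (Finset.univ.filter (fun j : Fin m => (j : ℕ) < k + 1)).Nonempty :=
        ⟨⟨k, hk⟩, by simp⟩
      have h2 := h _ hne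
      rw [hcard'] at h2
      simp only [Set.mem_Ioo, not_and, not_lt] at h2
      by_contra hcon
      push_neg at hcon
      have := h2 (by push_cast at hcon ⊢; linarith)
      push_cast at hcon hlt this
      linarith
  -- apply at k = m
  obtain ⟨_, hfull⟩ := key m le_rfl
  have hfilt : (Finset.univ.filter (fun j : Fin m => (j : ℕ) < m)) = Finset.univ := by
    ext j; simp [j.isLt]
  rw [hfilt] at hfull
  have hre : (∑ j, (ι j).re) = -(ν : ℝ) := by
    have := congrArg Complex.re hsum
    simpa [Complex.re_sum] using this
  rw [hre] at hfull
  have hν' : (ν : ℝ) = (m : ℝ) - 2 := by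
    subst hν
    push_cast [Nat.cast_sub (by omega : 2 ≤ m)]
    ring
  rw [hν'] at hfull
  linarith
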